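/- Let T_A = Aℤⁿ/qℤⁿ be a discrete weighted torus satisfying the distance condition. Then for every x ∈ Aℤⁿ and every i with 1 ≤ i ≤ n, the sum of Ollivier curvatures along the i-th fundamental cycle is non-positive: Σ_{j=0}^{q−1} κ([x + jα_i], [x + (j+1)α_i]) ≤ 0. -/

import Mathlib

open Filter Topology

noncomputable section

namespace PMT

/-- The `i`-th standard unit vector in `ℤⁿ`. -/
def e (n : ℕ) (i : Fin n) : Fin n → ℤ := fun j => if j = i then 1 else 0

/-- The grid graph on `ℤⁿ`: `x ∼ y` iff `‖x − y‖₁ = 1`. -/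
def grid (n : ℕ) : SimpleGraph (Fin n → ℤ) where
  Adj x y := (∑ i, |x i - y i|) = 1
  symm := by
    constructor
    intro x y h
    have h' : ∀ i ∈ Finset.univ, |y i - x i| = |x i - y i| :=
      fun i _ => abs_sub_comm _ _
    rw [Finset.sum_congr rfl h']
    exact h
  loopless := by constructor; intro x h; simp at h

/-- The graph Laplacian `Δf(x) = Σ_{y∼x} w(x,y)(f(y)−f(x))` of an integer-valued function. -/
def lap {V : Type*} (G : SimpleGraph V) (w : V → V → ℝ) (f : V → ℤ) (x : V) : ℝ :=
  ∑ᶠ y ∈ {y | G.Adj x y}, w x y * ((f y : ℝ) - (f x : ℝ))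

/-- `f : V → ℤ` is 1-Lipschitz with respect to the combinatorial graph distance. -/
def Lip1 {V : Type*} (G : SimpleGraph V) (f : V → ℤ) : Prop :=
  ∀ x y, |f x - f y| ≤ (G.dist x y : ℤ)

/-- Ollivier curvature of the pair `(x, y)`:
`κ(x,y) = inf {Δf(x) − Δf(y) | f : V → ℤ, f 1-Lipschitz, f(y) = f(x) + 1}`. -/
def kappa {V : Type*} (G : SimpleGraph V) (w : V → V → ℝ) (x y : V) : ℝ :=
  sInf {r | ∃ f : V → ℤ, Lip1 G f ∧ f y = f x + 1 ∧ r = lap G w f x - lap G w f y}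

/-- Scalar curvature `R(x) = Σ_{y∼x} κ(x,y)`. -/
def scal {V : Type*} (G : SimpleGraph V) (w : V → V → ℝ) (x : V) : ℝ :=
  ∑ᶠ y ∈ {y | G.Adj x y}, kappa G w x y

/-- A weighted grid graph `(ℤⁿ, w)`: symmetric weights, positive on edges. -/
structure GridWeight (n : ℕ) where
  w : (Fin n → ℤ) → (Fin n → ℤ) → ℝ
  symm : ∀ x y, w x y = w y x
  pos : ∀ x y, (grid n).Adj x y → 0 < w x y

/-- The quantity `Abs(x)` measuring the distortion from the standard grid graph. -/
def Absf (n : ℕ) (w : (Fin n → ℤ) → (Fin n → ℤ) → ℝ) (x : Fin n → ℤ) : ℝ :=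
  ∑ i, ∑ j, if i ≠ j then
      (|w x (x + e n i) - w (x + e n j) (x + e n j + e n i)| +
       |w x (x + e n i) - w (x - e n j) (x - e n j + e n i)| +
       |w x (x - e n i) - w (x + e n j) (x + e n j - e n i)| +
       |w x (x - e n i) - w (x - e n j) (x - e n j - e n i)|)
    else 0

/-- The `ℓ^∞` norm `‖x‖_∞` of `x ∈ ℤⁿ`, as a natural number. -/
def nInf {n : ℕ} (x : Fin n → ℤ) : ℕ := Finset.univ.sup fun i => (x i).natAbs

/-- The cube `Q_r = {y ∈ ℤⁿ : ‖y‖∞ ≤ r}` as a finset. -/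
def Qr (n r : ℕ) : Finset (Fin n → ℤ) := Finset.Icc (fun _ => -(r : ℤ)) (fun _ => (r : ℤ))

/-- `Σ_{e ∈ E_r} w(e)`: the sum of weights of edges with exactly one endpoint in `Q_r`
(each such edge is counted once, via its endpoint inside `Q_r`). -/
def ErSum (n : ℕ) (w : (Fin n → ℤ) → (Fin n → ℤ) → ℝ) (r : ℕ) : ℝ :=
  ∑ x ∈ Qr n r, ∑ i,
    ((if x + e n i ∉ Qr n r then w x (x + e n i) else 0) +
     (if x - e n i ∉ Qr n r then w x (x - e n i) else 0))

/-- `Σ_{τ ∈ Ẽ_r} w(τ)`: the sum of weights of edges joining the sphere `S_{r+1}` to the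
sphere `S_{r+2}` (each such edge is counted once, via its endpoint in `S_{r+1}`). -/
def TErSum (n : ℕ) (w : (Fin n → ℤ) → (Fin n → ℤ) → ℝ) (r : ℕ) : ℝ :=
  ∑ x ∈ Qr n (r + 1), if nInf x = r + 1 then
      (∑ i, ((if nInf (x + e n i) = r + 2 then w x (x + e n i) else 0) +
             (if nInf (x - e n i) = r + 2 then w x (x - e n i) else 0)))
    else 0

/-- The weighted grid graph `(ℤⁿ, w)` is asymptotically flat: there is `p > n` with
`w = 1 + o(1)`, `Abs(x) = O(‖x‖∞^{−p})` and `|R(x)| = O(‖x‖∞^{−p})` as `‖x‖∞ → ∞`. -/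
def AsympFlatGrid (n : ℕ) (W : GridWeight n) : Prop :=
  ∃ p : ℝ, (n : ℝ) < p ∧
    (∀ ε : ℝ, 0 < ε → ∃ M : ℕ, ∀ x y, (grid n).Adj x y → M ≤ nInf x → |W.w x y - 1| ≤ ε) ∧
    (∃ C : ℝ, ∃ M : ℕ, 0 < M ∧ ∀ x, M ≤ nInf x → Absf n W.w x ≤ C * (nInf x : ℝ) ^ (-p)) ∧
    (∃ C : ℝ, ∃ M : ℕ, 0 < M ∧ ∀ x, M ≤ nInf x → |scal (grid n) W.w x| ≤ C * (nInf x : ℝ) ^ (-p))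


/-- The data of a discrete torus `T_A = Aℤⁿ/qℤⁿ`: an integer matrix `A` with
`det A ≠ 0`, and `q = k·|det A|` for some `k ∈ ℤ₊`. We parametrize the lattice `Aℤⁿ` by
`ℤⁿ` via `z ↦ Az` (so the vertex `x = Az` corresponds to `z`, and `α_i = A e_i`
corresponds to `e_i`). -/
structure TorusData (n : ℕ) where
  A : Matrix (Fin n) (Fin n) ℤ
  hdet : A.det ≠ 0
  k : ℕ
  hk : 0 < k

/-- `q = k·|det A|`. -/
def TorusData.q {n : ℕ} (T : TorusData n) : ℕ := T.k * T.A.det.natAbs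

/-- The subgroup `{z ∈ ℤⁿ | Az ∈ qℤⁿ}` of `ℤⁿ`; under `z ↦ Az` it corresponds to the
sublattice `qℤⁿ ⊆ Aℤⁿ`. -/
def TorusData.lat {n : ℕ} (T : TorusData n) : AddSubgroup (Fin n → ℤ) where
  carrier := {z | ∀ j, ((T.q : ℤ)) ∣ T.A.mulVec z j}
  zero_mem' := by intro j; simp [Matrix.mulVec_zero]
  add_mem' := by
    intro a b ha hb j
    rw [Matrix.mulVec_add]
    exact dvd_add (ha j) (hb j)
  neg_mem' := by
    intro a ha j
    rw [Matrix.mulVec_neg]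
    exact dvd_neg.mpr (ha j)

/-- The vertex set of the discrete torus `T_A = Aℤⁿ/qℤⁿ` (in the `z`-parametrization). -/
def TorusV {n : ℕ} (T : TorusData n) : Type := (Fin n → ℤ) ⧸ T.lat

instance {n : ℕ} (T : TorusData n) : AddCommGroup (TorusV T) :=
  QuotientAddGroup.Quotient.addCommGroup T.lat

/-- The quotient map `Aℤⁿ → T_A` (in the `z`-parametrization, `z` stands for `x = Az`). -/
def tmk {n : ℕ} (T : TorusData n) (z : Fin n → ℤ) : TorusV T := QuotientAddGroup.mk z

/-- The graph structure of the discrete torus: `[x] ∼ [y]` iff `x − y ∈ qℤⁿ ± α_i`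
for some `i` (and `[x] ≠ [y]`, so that the graph is simple). -/
def torusG {n : ℕ} (T : TorusData n) : SimpleGraph (TorusV T) where
  Adj a b := a ≠ b ∧ ∃ i : Fin n, b - a = tmk T (e n i) ∨ a - b = tmk T (e n i)
  symm := by
    constructor
    rintro a b ⟨hne, i, h | h⟩
    · exact ⟨hne.symm, i, Or.inr h⟩
    · exact ⟨hne.symm, i, Or.inl h⟩
  loopless := by constructor; rintro a ⟨hne, -⟩; exact hne rfl

/-- The distance condition: every combinatorial ball of radius 2 in the lattice `Aℤⁿ`
embeds isometrically into the torus, i.e. `d(u,v) = d([u],[v])` for all `u, v ∈ B₂(x)`. -/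
def DistCond {n : ℕ} (T : TorusData n) : Prop :=
  ∀ x u v : Fin n → ℤ, (grid n).dist x u ≤ 2 → (grid n).dist x v ≤ 2 →
    (grid n).dist u v = (torusG T).dist (tmk T u) (tmk T v)


section Aux

variable {n : ℕ}

/-- The `ℓ¹` distance on `ℤⁿ`. -/
def d1 {n : ℕ} (u v : Fin n → ℤ) : ℤ := ∑ k, |u k - v k|

lemma d1_nonneg (u v : Fin n → ℤ) : 0 ≤ d1 u v :=
  Finset.sum_nonneg fun _ _ => abs_nonneg _

lemma grid_adj_iff {u v : Fin n → ℤ} : (grid n).Adj u v ↔ d1 u v = 1 := Iff.rfl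

lemma d1_self (u : Fin n → ℤ) : d1 u u = 0 := by simp [d1]

lemma d1_eq_zero {u v : Fin n → ℤ} (h : d1 u v = 0) : u = v := by
  funext k
  have h0 : ∀ j ∈ Finset.univ, (0:ℤ) ≤ |u j - v j| := fun j _ => abs_nonneg _
  have hk := (Finset.sum_eq_zero_iff_of_nonneg h0).mp h k (Finset.mem_univ k)
  have := abs_eq_zero.mp hk
  omega

lemma d1_triangle (u m v : Fin n → ℤ) : d1 u v ≤ d1 u m + d1 m v := by
  rw [d1, d1, d1, ← Finset.sum_add_distrib]
  exact Finset.sum_le_sum fun k _ => abs_sub_le _ _ _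

lemma d1_le_length {u v : Fin n → ℤ} (p : (grid n).Walk u v) : d1 u v ≤ (p.length : ℤ) := by
  induction p with
  | nil => simp [d1_self]
  | @cons u w v h p ih =>
    have h1 : d1 u w = 1 := grid_adj_iff.mp h
    have h2 := d1_triangle u w v
    simp only [SimpleGraph.Walk.length_cons]
    push_cast
    linarith

lemma exists_grid_walk (N : ℕ) : ∀ u v : Fin n → ℤ, d1 u v = N →
    ∃ p : (grid n).Walk u v, p.length = N := by
  induction N with
  | zero =>
    intro u v h
    obtain rfl : u = v := d1_eq_zero (by exact_mod_cast h)
    exact ⟨SimpleGraph.Walk.nil, rfl⟩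
  | succ N ih =>
    intro u v h
    have hne : ∃ m, u m ≠ v m := by
      by_contra hc
      push_neg at hc
      obtain rfl : u = v := funext hc
      rw [d1_self] at h
      exact absurd h (by exact_mod_cast (Nat.succ_ne_zero N).symm)
    obtain ⟨m, hm⟩ := hne
    set s : ℤ := if u m < v m then 1 else -1 with hs
    set u' : Fin n → ℤ := Function.update u m (u m + s) with hu'
    have hum' : u' m = u m + s := by rw [hu', Function.update_self]
    have hum : |u m + s - v m| = |u m - v m| - 1 := by
      rcases lt_or_gt_of_ne hm with hlt | hgt
      · rw [hs]; rw [if_pos hlt, abs_of_nonpos (by omega), abs_of_nonpos (by omega)]; ring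
      · rw [hs]; rw [if_neg (by omega), abs_of_nonneg (by omega), abs_of_nonneg (by omega)]; ring
    have hsplit : ∀ w : Fin n → ℤ,
        d1 w v = |w m - v m| + ∑ k ∈ ({m}ᶜ : Finset (Fin n)), |w k - v k| := by
      intro w
      rw [d1]
      exact Fintype.sum_eq_add_sum_compl m _
    have herase : ∑ k ∈ ({m}ᶜ : Finset (Fin n)), |u' k - v k|
        = ∑ k ∈ ({m}ᶜ : Finset (Fin n)), |u k - v k| := by
      refine Finset.sum_congr rfl fun k hk => ?_
      have hkm : k ≠ m := by simpa using hk
      rw [hu', Function.update_of_ne hkm]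
    have hd : d1 u' v = (N : ℤ) := by
      have h2 := hsplit u
      rw [h2] at h
      rw [hsplit u', herase, hum', hum]
      push_cast at h ⊢
      linarith
    have hadj : (grid n).Adj u u' := by
      rw [grid_adj_iff, d1]
      rw [Finset.sum_eq_single_of_mem m (Finset.mem_univ m)]
      · rw [hum']
        have : u m - (u m + s) = -s := by ring
        rw [this, abs_neg, hs]
        split_ifs <;> norm_num
      · intro k _ hk
        rw [hu', Function.update_of_ne hk, sub_self, abs_zero]
    obtain ⟨p, hp⟩ := ih u' v hd
    exact ⟨SimpleGraph.Walk.cons hadj p, by simp [hp]⟩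

lemma grid_dist_eq (u v : Fin n → ℤ) : (((grid n).dist u v : ℕ) : ℤ) = d1 u v := by
  obtain ⟨p, hp⟩ := exists_grid_walk (d1 u v).toNat u v (Int.toNat_of_nonneg (d1_nonneg u v)).symm
  have h1 : (grid n).dist u v ≤ (d1 u v).toNat := hp ▸ SimpleGraph.dist_le p
  obtain ⟨q, hq⟩ := SimpleGraph.Reachable.exists_walk_length_eq_dist ⟨p⟩ (u := u) (v := v)
  have h2 : d1 u v ≤ (((grid n).dist u v : ℕ) : ℤ) := hq ▸ d1_le_length q
  have h3 := Int.toNat_of_nonneg (d1_nonneg u v)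
  omega

lemma d1_e_zero (m : Fin n) : d1 (e n m) 0 = 1 := by
  simp [d1, e, apply_ite (abs : ℤ → ℤ)]

lemma d1_neg_e_zero (m : Fin n) : d1 (-(e n m)) 0 = 1 := by
  simp [d1, e, apply_ite (abs : ℤ → ℤ)]

lemma grid_adj_unit {u v : Fin n → ℤ} (h : (grid n).Adj u v) :
    ∃ m, v - u = e n m ∨ u - v = e n m := by
  rw [grid_adj_iff, d1] at h
  obtain ⟨m, -, hm⟩ := Finset.exists_ne_zero_of_sum_ne_zero (by rw [h]; exact one_ne_zero)
  have hsplit : |u m - v m| + ∑ k ∈ ({m}ᶜ : Finset (Fin n)), |u k - v k| = 1 := by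
    rw [← h]; exact (Fintype.sum_eq_add_sum_compl m fun k => |u k - v k|).symm
  have h1 : 1 ≤ |u m - v m| := by
    have h0 : 0 ≤ |u m - v m| := abs_nonneg _
    have : 0 < |u m - v m| := lt_of_le_of_ne h0 (Ne.symm hm)
    omega
  have hnn : 0 ≤ ∑ k ∈ ({m}ᶜ : Finset (Fin n)), |u k - v k| :=
    Finset.sum_nonneg fun _ _ => abs_nonneg _
  have hfm : |u m - v m| = 1 := by omega
  have hS : ∑ k ∈ ({m}ᶜ : Finset (Fin n)), |u k - v k| = 0 := by omega
  have hk0 : ∀ k, k ≠ m → u k = v k := by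
    intro k hk
    have := (Finset.sum_eq_zero_iff_of_nonneg (fun j _ => abs_nonneg (u j - v j))).mp hS k
      (by simpa using hk)
    have := abs_eq_zero.mp this
    omega
  rcases (abs_eq (by norm_num : (0:ℤ) ≤ 1)).mp hfm with h' | h'
  · refine ⟨m, Or.inr (funext fun k => ?_)⟩
    by_cases hkm : k = m
    · subst hkm; simp [e, h']
    · simp [e, hkm, hk0 k hkm]
  · refine ⟨m, Or.inl (funext fun k => ?_)⟩
    by_cases hkm : k = m
    · subst hkm; simp [e]; omega
    · simp [e, hkm, hk0 k hkm]

lemma d1_formula (z : Fin n → ℤ) (i : Fin n) (a b : ℤ) (δ : Fin n → ℤ) :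
    d1 (z + a • e n i) (z + b • e n i + δ)
      = |a - b - δ i| + ∑ k ∈ ({i}ᶜ : Finset (Fin n)), |δ k| := by
  have hco : ∀ k, (z + a • e n i) k - (z + b • e n i + δ) k = (a - b) * (e n i k) - δ k := by
    intro k
    simp only [Pi.add_apply, Pi.smul_apply, smul_eq_mul]
    ring
  rw [d1, Fintype.sum_eq_add_sum_compl i _]
  congr 1
  · rw [hco i]; simp [e]
  · refine Finset.sum_congr rfl fun k hk => ?_
    have hki : k ≠ i := by simpa using hk
    rw [hco k]
    simp [e, hki]

lemma d1_shift (z : Fin n → ℤ) (i : Fin n) (a b : ℤ) :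
    d1 (z + a • e n i) (z + b • e n i) = |a - b| := by
  have := d1_formula z i a b 0
  simpa using this

lemma d1_zero_split (δ : Fin n → ℤ) (i : Fin n) :
    d1 δ 0 = |δ i| + ∑ k ∈ ({i}ᶜ : Finset (Fin n)), |δ k| := by
  rw [d1]
  simp only [Pi.zero_apply, sub_zero]
  exact Fintype.sum_eq_add_sum_compl i _

lemma tmk_add (T : TorusData n) (u v : Fin n → ℤ) : tmk T (u + v) = tmk T u + tmk T v := rfl

lemma tmk_sub (T : TorusData n) (u v : Fin n → ℤ) : tmk T (u - v) = tmk T u - tmk T v := rfl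

lemma tmk_eq_iff (T : TorusData n) (u v : Fin n → ℤ) :
    tmk T u = tmk T v ↔ -u + v ∈ T.lat :=
  QuotientAddGroup.eq

lemma torus_adj_repr {T : TorusData n} {a : Fin n → ℤ} {b : TorusV T}
    (h : (torusG T).Adj (tmk T a) b) :
    ∃ δ : Fin n → ℤ, d1 δ 0 = 1 ∧ b = tmk T (a + δ) := by
  obtain ⟨-, m, hm | hm⟩ := h
  · refine ⟨e n m, d1_e_zero m, ?_⟩
    rw [tmk_add, ← hm]; abel
  · refine ⟨-(e n m), d1_neg_e_zero m, ?_⟩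
    rw [tmk_add]
    have hneg : tmk T (-(e n m)) = - tmk T (e n m) := rfl
    rw [hneg, ← hm]; abel

lemma torus_reach_of_walk (T : TorusData n) {u v : Fin n → ℤ} (p : (grid n).Walk u v) :
    (torusG T).Reachable (tmk T u) (tmk T v) := by
  induction p with
  | nil => exact SimpleGraph.Reachable.refl _
  | @cons u w v h p ih =>
    refine SimpleGraph.Reachable.trans ?_ ih
    by_cases he : tmk T u = tmk T w
    · rw [he]
    · refine SimpleGraph.Adj.reachable ⟨he, ?_⟩
      obtain ⟨m, hm | hm⟩ := grid_adj_unit h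
      · exact ⟨m, Or.inl (by rw [← tmk_sub, hm])⟩
      · exact ⟨m, Or.inr (by rw [← tmk_sub, hm])⟩

lemma torus_connected (T : TorusData n) : (torusG T).Connected := by
  rw [SimpleGraph.connected_iff]
  refine ⟨fun a b => ?_, ⟨tmk T 0⟩⟩
  obtain ⟨u, rfl⟩ := QuotientAddGroup.mk_surjective a
  obtain ⟨v, rfl⟩ := QuotientAddGroup.mk_surjective b
  obtain ⟨p, -⟩ := exists_grid_walk (d1 u v).toNat u v (Int.toNat_of_nonneg (d1_nonneg u v)).symm
  exact torus_reach_of_walk T p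

lemma torus_dist_eq {T : TorusData n} (hdist : DistCond T) {x u v : Fin n → ℤ}
    (h1 : d1 x u ≤ 2) (h2 : d1 x v ≤ 2) :
    (((torusG T).dist (tmk T u) (tmk T v) : ℕ) : ℤ) = d1 u v := by
  rw [← grid_dist_eq] at h1 h2
  have g1 : (grid n).dist x u ≤ 2 := by exact_mod_cast h1
  have g2 : (grid n).dist x v ≤ 2 := by exact_mod_cast h2
  rw [← hdist x u v g1 g2, grid_dist_eq]

/-- The cut-off distance function used along the fundamental cycle. -/
def Ff (T : TorusData n) (z : Fin n → ℤ) (i : Fin n) (j : ℤ) (a : TorusV T) : ℤ :=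
  min (((torusG T).dist (tmk T (z + (j - 1) • e n i)) a : ℕ) : ℤ) 3

lemma Ff_key {T : TorusData n} (hdist : DistCond T) (z : Fin n → ℤ) (i : Fin n) (j : ℤ)
    (δ : Fin n → ℤ) (hδ : d1 δ 0 ≤ 1) :
    Ff T z i j (tmk T (z + (j + 1) • e n i + δ)) =
      Ff T z i (j + 1) (tmk T (z + (j + 1) • e n i + δ)) + 1 := by
  have hsplit := d1_zero_split δ i
  have hnn : 0 ≤ ∑ k ∈ ({i}ᶜ : Finset (Fin n)), |δ k| :=
    Finset.sum_nonneg fun _ _ => abs_nonneg _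
  have hδi : |δ i| ≤ 1 := by linarith
  obtain ⟨hδ1, hδ2⟩ := abs_le.mp hδi
  have hδle : δ i ≤ |δ i| := le_abs_self _
  have hxu : d1 (z + j • e n i) (z + (j - 1) • e n i) ≤ 2 := by
    rw [d1_shift]; norm_num
  have hxu' : d1 (z + j • e n i) (z + j • e n i) ≤ 2 := by rw [d1_self]; norm_num
  have hxv : d1 (z + j • e n i) (z + (j + 1) • e n i + δ) ≤ 2 := by
    rw [d1_formula]
    have hb : |j - (j + 1) - δ i| = 1 + δ i := by
      rw [show j - (j + 1) - δ i = -(1 + δ i) by ring, abs_neg, abs_of_nonneg (by linarith)]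
    rw [hb]; linarith
  have e1 := torus_dist_eq hdist hxu hxv
  have e2 := torus_dist_eq hdist hxu' hxv
  rw [d1_formula] at e1 e2
  have ha : |j - 1 - (j + 1) - δ i| = 2 + δ i := by
    rw [show j - 1 - (j + 1) - δ i = -(2 + δ i) by ring, abs_neg, abs_of_nonneg (by linarith)]
  have hb : |j - (j + 1) - δ i| = 1 + δ i := by
    rw [show j - (j + 1) - δ i = -(1 + δ i) by ring, abs_neg, abs_of_nonneg (by linarith)]
  rw [ha] at e1
  rw [hb] at e2
  unfold Ff
  rw [show (j : ℤ) + 1 - 1 = j by ring]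
  rw [e1, e2]
  rw [min_eq_left (by linarith), min_eq_left (by linarith)]
  ring

lemma Ff_self {T : TorusData n} (hdist : DistCond T) (z : Fin n → ℤ) (i : Fin n) (j : ℤ) :
    Ff T z i j (tmk T (z + j • e n i)) = 1 := by
  have hxu : d1 (z + j • e n i) (z + (j - 1) • e n i) ≤ 2 := by
    rw [d1_shift]; norm_num
  have hxv : d1 (z + j • e n i) (z + j • e n i) ≤ 2 := by rw [d1_self]; norm_num
  have e1 := torus_dist_eq hdist hxu hxv
  rw [d1_shift] at e1
  have : |j - 1 - j| = 1 := by rw [show j - 1 - j = -1 by ring]; norm_num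
  rw [this] at e1
  unfold Ff
  rw [e1]
  norm_num

lemma Ff_lip {T : TorusData n} (z : Fin n → ℤ) (i : Fin n) (j : ℤ) :
    Lip1 (torusG T) (Ff T z i j) := by
  intro a b
  have hconn := torus_connected T
  set P := tmk T (z + (j - 1) • e n i) with hP
  have h1 : (torusG T).dist P a ≤ (torusG T).dist P b + (torusG T).dist b a :=
    hconn.dist_triangle
  have h2 : (torusG T).dist P b ≤ (torusG T).dist P a + (torusG T).dist a b :=
    hconn.dist_triangle
  have h3 : (torusG T).dist a b = (torusG T).dist b a := SimpleGraph.dist_comm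
  unfold Ff
  rw [← hP, abs_le]
  constructor <;> omega

lemma torus_nbhd_finite (T : TorusData n) (a : TorusV T) :
    {b | (torusG T).Adj a b}.Finite := by
  apply Set.Finite.subset (Set.finite_range
    (fun p : Fin n × Bool => if p.2 then a + tmk T (e n p.1) else a - tmk T (e n p.1)))
  rintro b ⟨-, m, hm | hm⟩
  · exact ⟨(m, true), by simp only [if_pos]; rw [← hm]; abel⟩
  · refine ⟨(m, false), ?_⟩
    have hab : a - tmk T (e n m) = b := by rw [← hm]; abel
    simpa using hab

lemma lap_eq (T : TorusData n) (w : TorusV T → TorusV T → ℝ) (f : TorusV T → ℤ) (a : TorusV T) :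
    lap (torusG T) w f a
      = ∑ y ∈ (torus_nbhd_finite T a).toFinset, w a y * ((f y : ℝ) - (f a : ℝ)) := by
  unfold lap
  exact finsum_mem_eq_finite_toFinset_sum _ (torus_nbhd_finite T a)

lemma lap_abs_le (T : TorusData n) (w : TorusV T → TorusV T → ℝ)
    (hpos : ∀ a b, (torusG T).Adj a b → 0 < w a b)
    (f : TorusV T → ℤ) (hf : Lip1 (torusG T) f) (a : TorusV T) :
    |lap (torusG T) w f a| ≤ ∑ y ∈ (torus_nbhd_finite T a).toFinset, w a y := by
  rw [lap_eq]
  refine (Finset.abs_sum_le_sum_abs _ _).trans (Finset.sum_le_sum fun y hy => ?_)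
  have hadj : (torusG T).Adj a y := by
    have := (Set.Finite.mem_toFinset (torus_nbhd_finite T a)).mp hy
    exact this
  have hw := hpos a y hadj
  have hd : (torusG T).dist a y = 1 := SimpleGraph.dist_eq_one_iff_adj.mpr hadj
  have hfle : |f y - f a| ≤ 1 := by
    have h := hf y a
    rw [SimpleGraph.dist_comm, hd] at h
    exact_mod_cast h
  have hcast : |(f y : ℝ) - (f a : ℝ)| ≤ 1 := by
    have : ((|f y - f a| : ℤ) : ℝ) ≤ 1 := by exact_mod_cast hfle
    rwa [Int.cast_abs, Int.cast_sub] at this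
  rw [abs_mul, abs_of_pos hw]
  calc w a y * |(f y : ℝ) - (f a : ℝ)| ≤ w a y * 1 :=
        mul_le_mul_of_nonneg_left hcast hw.le
    _ = w a y := mul_one _

lemma kappa_le_of (T : TorusData n) (w : TorusV T → TorusV T → ℝ)
    (hpos : ∀ a b, (torusG T).Adj a b → 0 < w a b)
    (x y : TorusV T) (f : TorusV T → ℤ) (hf : Lip1 (torusG T) f) (hxy : f y = f x + 1) :
    kappa (torusG T) w x y ≤ lap (torusG T) w f x - lap (torusG T) w f y := by
  apply csInf_le
  · refine ⟨-((∑ y' ∈ (torus_nbhd_finite T x).toFinset, w x y')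
      + ∑ y' ∈ (torus_nbhd_finite T y).toFinset, w y y'), ?_⟩
    rintro r ⟨g, hg, -, rfl⟩
    have b1 := abs_le.mp (lap_abs_le T w hpos g hg x)
    have b2 := abs_le.mp (lap_abs_le T w hpos g hg y)
    obtain ⟨b11, b12⟩ := b1
    obtain ⟨b21, b22⟩ := b2
    linarith
  · exact ⟨f, hf, hxy, rfl⟩

lemma lap_congr (T : TorusData n) (w : TorusV T → TorusV T → ℝ) (a : TorusV T)
    (f g : TorusV T → ℤ)
    (h : ∀ b, (torusG T).Adj a b → f b - f a = g b - g a) :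
    lap (torusG T) w f a = lap (torusG T) w g a := by
  unfold lap
  refine finsum_mem_congr rfl fun y hy => ?_
  have hy' : (torusG T).Adj a y := hy
  have hc : (f y : ℝ) - (f a : ℝ) = (g y : ℝ) - (g a : ℝ) := by exact_mod_cast h y hy'
  rw [hc]

end Aux

/-- the sum of the Ollivier curvatures along a fundamental cycle of a
discrete weighted torus satisfying the distance condition is non-positive. -/
theorem torus_cycle_curvature_nonpos (n : ℕ) (T : TorusData n)
    (wT : TorusV T → TorusV T → ℝ)
    (hsymm : ∀ a b, wT a b = wT b a)
    (hpos : ∀ a b, (torusG T).Adj a b → 0 < wT a b)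
    (hdist : DistCond T)
    (z : Fin n → ℤ) (i : Fin n) :
    ∑ j ∈ Finset.range T.q,
      kappa (torusG T) wT (tmk T (z + (j : ℤ) • e n i)) (tmk T (z + ((j : ℤ) + 1) • e n i))
      ≤ 0 := by
  classical
  set Gg : ℕ → ℝ := fun j => lap (torusG T) wT (Ff T z i (j : ℤ)) (tmk T (z + (j : ℤ) • e n i))
    with hGg
  have key_in_lat : ((T.q : ℤ)) • e n i ∈ T.lat := by
    intro j
    rw [Matrix.mulVec_smul]
    simp only [Pi.smul_apply, smul_eq_mul]
    exact dvd_mul_right _ _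
  have hXq : tmk T (z + (T.q : ℤ) • e n i) = tmk T (z + ((0:ℕ) : ℤ) • e n i) := by
    rw [tmk_eq_iff]
    have hrw : -(z + (T.q:ℤ) • e n i) + (z + ((0:ℕ):ℤ) • e n i) = -((T.q:ℤ) • e n i) := by
      push_cast
      rw [zero_smul]
      abel
    rw [hrw]
    exact T.lat.neg_mem key_in_lat
  have hPq : tmk T (z + ((T.q:ℤ) - 1) • e n i) = tmk T (z + (((0:ℕ):ℤ) - 1) • e n i) := by
    rw [tmk_eq_iff]
    have hrw : -(z + ((T.q:ℤ) - 1) • e n i) + (z + (((0:ℕ):ℤ) - 1) • e n i)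
        = -((T.q:ℤ) • e n i) := by
      simp only [Nat.cast_zero, sub_smul, zero_smul, one_smul]
      abel
    rw [hrw]
    exact T.lat.neg_mem key_in_lat
  have hFq : Ff T z i ((T.q : ℕ) : ℤ) = Ff T z i ((0:ℕ) : ℤ) := by
    funext a
    unfold Ff
    rw [hPq]
  have hstep : ∀ j ∈ Finset.range T.q,
      kappa (torusG T) wT (tmk T (z + (j:ℤ) • e n i)) (tmk T (z + ((j:ℤ) + 1) • e n i))
        ≤ Gg j - Gg (j + 1) := by
    intro j _
    have hlip := Ff_lip (T := T) z i (j : ℤ)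
    have hself := Ff_self hdist z i (j : ℤ)
    have hself' := Ff_self hdist z i ((j : ℤ) + 1)
    have hkey0 := Ff_key hdist z i (j : ℤ) 0 (by rw [d1_self]; norm_num)
    have hXrw : tmk T (z + ((j:ℤ) + 1) • e n i + 0) = tmk T (z + ((j:ℤ) + 1) • e n i) := by
      rw [add_zero]
    have hval2 : Ff T z i (j:ℤ) (tmk T (z + ((j:ℤ) + 1) • e n i)) = 2 := by
      rw [← hXrw, hkey0, hXrw, hself']
      norm_num
    have hval : Ff T z i (j:ℤ) (tmk T (z + ((j:ℤ) + 1) • e n i))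
        = Ff T z i (j:ℤ) (tmk T (z + (j:ℤ) • e n i)) + 1 := by
      rw [hval2, hself]
      norm_num
    have hk := kappa_le_of T wT hpos _ _ _ hlip hval
    have hlapeq : lap (torusG T) wT (Ff T z i (j:ℤ)) (tmk T (z + ((j:ℤ) + 1) • e n i))
        = lap (torusG T) wT (Ff T z i ((j:ℤ) + 1)) (tmk T (z + ((j:ℤ) + 1) • e n i)) := by
      apply lap_congr
      intro b hb
      obtain ⟨δ, hδ1, rfl⟩ := torus_adj_repr hb
      rw [Ff_key hdist z i (j:ℤ) δ (le_of_eq hδ1), hval2, hself']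
      ring
    have hGg1 : Gg (j + 1)
        = lap (torusG T) wT (Ff T z i ((j:ℤ) + 1)) (tmk T (z + ((j:ℤ) + 1) • e n i)) := by
      rw [hGg]
      push_cast
      rfl
    have hGg0 : Gg j = lap (torusG T) wT (Ff T z i (j:ℤ)) (tmk T (z + (j:ℤ) • e n i)) := by
      rw [hGg]
    rw [hGg0, hGg1, ← hlapeq]
    exact hk
  calc ∑ j ∈ Finset.range T.q,
        kappa (torusG T) wT (tmk T (z + (j:ℤ) • e n i)) (tmk T (z + ((j:ℤ) + 1) • e n i))
      ≤ ∑ j ∈ Finset.range T.q, (Gg j - Gg (j + 1)) := Finset.sum_le_sum hstep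
    _ = Gg 0 - Gg T.q := Finset.sum_range_sub' Gg T.q
    _ = 0 := by
        have hq0 : Gg T.q = Gg 0 := by
          rw [hGg]
          simp only
          rw [hFq, hXq]
        rw [hq0]
        ring

end PMT
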